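/- Let Ω ⊆ ℝⁿ and 0 < δ₁ < δ₂ ≤ n. Then for any function f : Ω → [−∞, ∞], ( ∫_Ω |f(x)| dH^{δ₂}_∞ )^{1/δ₂} ≤ (δ₂/δ₁)^{1/δ₂} ( ∫_Ω |f(x)|^{δ₁/δ₂} dH^{δ₁}_∞ )^{1/δ₁}. -/

import Mathlib

open Metric Set ENNReal

/-- The δ-dimensional Hausdorff content of a set `E ⊆ ℝⁿ`: the infimum of `∑ rᵢ^δ`
over all countable covers of `E` by open balls `B(xᵢ, rᵢ)`. -/
noncomputable def hContent (n : ℕ) (δ : ℝ) (E : Set (EuclideanSpace ℝ (Fin n))) : ℝ≥0∞ :=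
  ⨅ (c : ℕ → EuclideanSpace ℝ (Fin n)) (r : ℕ → NNReal)
    (_ : E ⊆ ⋃ i, Metric.ball (c i) (r i)), ∑' i, (r i : ℝ≥0∞) ^ δ

/-- The Choquet integral `∫_Ω f dH^δ_∞ = ∫_0^∞ H^δ_∞({x ∈ Ω : f x > t}) dt`. -/
noncomputable def choquet (n : ℕ) (δ : ℝ) (Ω : Set (EuclideanSpace ℝ (Fin n)))
    (f : EuclideanSpace ℝ (Fin n) → ℝ≥0∞) : ℝ≥0∞ :=
  ∫⁻ t in Set.Ioi (0 : ℝ), hContent n δ {x | x ∈ Ω ∧ ENNReal.ofReal t < f x}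

section aux

open MeasureTheory

lemma hContent_mono {n : ℕ} {δ : ℝ} {E F : Set (EuclideanSpace ℝ (Fin n))} (h : E ⊆ F) :
    hContent n δ E ≤ hContent n δ F := by
  refine le_iInf fun c => le_iInf fun r => le_iInf fun hF => ?_
  exact iInf_le_of_le c (iInf_le_of_le r (iInf_le_of_le (h.trans hF) le_rfl))

lemma tsum_rpow_le_aux {a : ℕ → ℝ≥0∞} {p : ℝ} (hp : 1 ≤ p) :
    ∑' i, (a i) ^ p ≤ (∑' i, a i) ^ p := by
  set S := ∑' i, a i with hSdef
  have hp0 : (0:ℝ) < p := lt_of_lt_of_le one_pos hp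
  rcases eq_or_ne S ⊤ with hS | hS
  · rw [hS, ENNReal.top_rpow_of_pos hp0]; exact le_top
  have h1 : ∀ i, a i ^ p ≤ S ^ (p - 1) * a i := by
    intro i
    have hai : a i ≤ S := ENNReal.le_tsum i
    have h2 : a i ^ p = a i ^ (p - 1) * a i := by
      have := ENNReal.rpow_add_of_nonneg (x := a i) (p - 1) 1 (by linarith) zero_le_one
      rw [sub_add_cancel, ENNReal.rpow_one] at this
      exact this
    rw [h2]
    exact mul_le_mul' (ENNReal.rpow_le_rpow hai (by linarith)) le_rfl
  calc ∑' i, a i ^ p ≤ ∑' i, S ^ (p - 1) * a i := ENNReal.tsum_le_tsum h1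
    _ = S ^ (p - 1) * S := by rw [ENNReal.tsum_mul_left]
    _ = S ^ (p - 1) * S ^ (1:ℝ) := by rw [ENNReal.rpow_one]
    _ = S ^ p := by
        rw [← ENNReal.rpow_add_of_nonneg _ _ (by linarith) zero_le_one, sub_add_cancel]

lemma hContent_le_rpow {n : ℕ} {δ₁ δ₂ : ℝ} (hδ₁ : 0 < δ₁) (hδ₁₂ : δ₁ ≤ δ₂)
    (E : Set (EuclideanSpace ℝ (Fin n))) :
    hContent n δ₂ E ≤ (hContent n δ₁ E) ^ (δ₂ / δ₁) := by
  have hδ₂0 : (0:ℝ) < δ₂ := lt_of_lt_of_le hδ₁ hδ₁₂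
  have h1 : (hContent n δ₂ E) ^ (δ₁ / δ₂) ≤ hContent n δ₁ E := by
    refine le_iInf fun c => le_iInf fun r => le_iInf fun hE => ?_
    have h2 : hContent n δ₂ E ≤ ∑' i, (r i : ℝ≥0∞) ^ δ₂ :=
      iInf_le_of_le c (iInf_le_of_le r (iInf_le_of_le hE le_rfl))
    have h3 : ∑' i, (r i : ℝ≥0∞) ^ δ₂ ≤ (∑' i, (r i : ℝ≥0∞) ^ δ₁) ^ (δ₂ / δ₁) := by
      have heq : ∀ i, (r i : ℝ≥0∞) ^ δ₂ = ((r i : ℝ≥0∞) ^ δ₁) ^ (δ₂ / δ₁) := by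
        intro i
        rw [← ENNReal.rpow_mul]
        congr 1
        field_simp
      simp_rw [heq]
      exact tsum_rpow_le_aux ((one_le_div hδ₁).mpr hδ₁₂)
    calc (hContent n δ₂ E) ^ (δ₁ / δ₂)
        ≤ (∑' i, (r i : ℝ≥0∞) ^ δ₂) ^ (δ₁ / δ₂) :=
          ENNReal.rpow_le_rpow h2 (by positivity)
      _ ≤ ((∑' i, (r i : ℝ≥0∞) ^ δ₁) ^ (δ₂ / δ₁)) ^ (δ₁ / δ₂) :=
          ENNReal.rpow_le_rpow h3 (by positivity)
      _ = ∑' i, (r i : ℝ≥0∞) ^ δ₁ := by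
          rw [← ENNReal.rpow_mul]
          have : δ₂ / δ₁ * (δ₁ / δ₂) = 1 := by field_simp
          rw [this, ENNReal.rpow_one]
  have h4 : hContent n δ₂ E = ((hContent n δ₂ E) ^ (δ₁ / δ₂)) ^ (δ₂ / δ₁) := by
    rw [← ENNReal.rpow_mul]
    have : δ₁ / δ₂ * (δ₂ / δ₁) = 1 := by field_simp
    rw [this, ENNReal.rpow_one]
  calc hContent n δ₂ E = ((hContent n δ₂ E) ^ (δ₁ / δ₂)) ^ (δ₂ / δ₁) := h4
    _ ≤ (hContent n δ₁ E) ^ (δ₂ / δ₁) := ENNReal.rpow_le_rpow h1 (by positivity)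

end aux

/-- Comparison of Choquet integrals over different dimensional Hausdorff contents:
`(∫_Ω |f| dH^{δ₂}_∞)^{1/δ₂} ≤ (δ₂/δ₁)^{1/δ₂} (∫_Ω |f|^{δ₁/δ₂} dH^{δ₁}_∞)^{1/δ₁}`. -/
theorem choquet_dimension_comparison (n : ℕ) (hn : 1 ≤ n) (δ₁ δ₂ : ℝ)
    (hδ₁ : 0 < δ₁) (hδ₁₂ : δ₁ < δ₂) (hδ₂ : δ₂ ≤ n)
    (Ω : Set (EuclideanSpace ℝ (Fin n))) (f : EuclideanSpace ℝ (Fin n) → EReal) :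
    (choquet n δ₂ Ω (fun x => (f x).abs)) ^ (1 / δ₂) ≤
      ENNReal.ofReal ((δ₂ / δ₁) ^ (1 / δ₂)) *
        (choquet n δ₁ Ω (fun x => (f x).abs ^ (δ₁ / δ₂))) ^ (1 / δ₁) := by
  classical
  open MeasureTheory in
  have hδ₂0 : (0:ℝ) < δ₂ := hδ₁.trans hδ₁₂
  set p : ℝ := δ₂ / δ₁ with hpdef
  set θ : ℝ := δ₁ / δ₂ with hθdef
  have hp0 : (0:ℝ) < p := div_pos hδ₂0 hδ₁
  have hp1 : (1:ℝ) < p := (one_lt_div hδ₁).mpr hδ₁₂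
  have hθ0 : (0:ℝ) < θ := div_pos hδ₁ hδ₂0
  have hθp : θ * p = 1 := by rw [hpdef, hθdef]; field_simp
  have hpθ : p * θ = 1 := by rw [hpdef, hθdef]; field_simp
  set φ : ℝ → ℝ≥0∞ := fun s => hContent n δ₁ {x | x ∈ Ω ∧ ENNReal.ofReal s < (f x).abs}
    with hφdef
  set B : ℝ≥0∞ := choquet n δ₁ Ω (fun x => (f x).abs ^ θ) with hBdef
  set A : ℝ≥0∞ := choquet n δ₂ Ω (fun x => (f x).abs) with hAdef
  -- Step B : B as integral of φ ∘ (·^p)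
  have stepB : B = ∫⁻ t in Set.Ioi (0:ℝ), φ (t ^ p) := by
    rw [hBdef]
    unfold choquet
    refine setLIntegral_congr_fun measurableSet_Ioi ?_
    intro t ht
    have hset : {x | x ∈ Ω ∧ ENNReal.ofReal t < (f x).abs ^ θ}
        = {x | x ∈ Ω ∧ ENNReal.ofReal (t ^ p) < (f x).abs} := by
      ext x
      simp only [Set.mem_setOf_eq, and_congr_right_iff]
      intro _
      have ha : ((f x).abs ^ θ) ^ p = (f x).abs := by
        rw [← ENNReal.rpow_mul, hθp, ENNReal.rpow_one]
      rw [← ENNReal.ofReal_rpow_of_pos ht]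
      constructor
      · intro h
        have := ENNReal.rpow_lt_rpow h hp0
        rwa [ha] at this
      · intro h
        have h2 : (ENNReal.ofReal t ^ p) ^ θ < ((f x).abs) ^ θ := ENNReal.rpow_lt_rpow h hθ0
        rwa [← ENNReal.rpow_mul, hpθ, ENNReal.rpow_one] at h2
    exact congrArg (hContent n δ₁) hset
  rcases eq_or_ne B ⊤ with hB | hB
  · rw [hB, ENNReal.top_rpow_of_pos (by positivity)]
    rw [ENNReal.mul_top (by
      simp only [ne_eq, ENNReal.ofReal_eq_zero, not_le]
      positivity)]
    exact le_top
  -- Step i : φ s * (ofReal s)^θ ≤ B for s > 0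
  have stepi : ∀ s : ℝ, 0 < s → φ s * (ENNReal.ofReal s) ^ θ ≤ B := by
    intro s hs
    have hcs : (0:ℝ) < s ^ θ := Real.rpow_pos_of_pos hs θ
    have h1 : φ s * (ENNReal.ofReal s) ^ θ = ∫⁻ _ in Set.Ioo (0:ℝ) (s ^ θ), φ s := by
      rw [setLIntegral_const, Real.volume_Ioo, sub_zero, ENNReal.ofReal_rpow_of_pos hs]
    rw [h1]
    calc ∫⁻ _ in Set.Ioo (0:ℝ) (s ^ θ), φ s
        ≤ ∫⁻ t in Set.Ioo (0:ℝ) (s ^ θ), φ (t ^ p) := by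
          refine setLIntegral_mono' measurableSet_Ioo fun t ht => ?_
          refine hContent_mono fun x hx => ?_
          refine ⟨hx.1, lt_of_le_of_lt (ENNReal.ofReal_le_ofReal ?_) hx.2⟩
          have h2 : t ^ p ≤ (s ^ θ) ^ p :=
            Real.rpow_le_rpow (le_of_lt ht.1) (le_of_lt ht.2) (le_of_lt hp0)
          rwa [← Real.rpow_mul (le_of_lt hs), hθp, Real.rpow_one] at h2
      _ ≤ ∫⁻ t in Set.Ioi (0:ℝ), φ (t ^ p) := lintegral_mono_set Set.Ioo_subset_Ioi_self
      _ = B := stepB.symm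
  -- φ is finite and bounded for s > 0
  have hφbound : ∀ s : ℝ, 0 < s → φ s ≤ B * (ENNReal.ofReal s) ^ (-θ) := by
    intro s hs
    have he0 : ENNReal.ofReal s ≠ 0 := by simp [ENNReal.ofReal_eq_zero, not_le, hs]
    have heT : ENNReal.ofReal s ≠ ⊤ := ENNReal.ofReal_ne_top
    have h1 : φ s * (ENNReal.ofReal s) ^ θ * (ENNReal.ofReal s) ^ (-θ)
        ≤ B * (ENNReal.ofReal s) ^ (-θ) := mul_le_mul_left (stepi s hs) _
    rwa [mul_assoc, ← ENNReal.rpow_add θ (-θ) he0 heT, add_neg_cancel, ENNReal.rpow_zero,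
      mul_one] at h1
  -- pointwise bound for the integrand of A
  have hpoint : ∀ t : ℝ, 0 < t →
      hContent n δ₂ {x | x ∈ Ω ∧ ENNReal.ofReal t < (f x).abs}
        ≤ B ^ (p - 1) * ((ENNReal.ofReal t) ^ (θ - 1) * φ t) := by
    intro t ht
    calc hContent n δ₂ {x | x ∈ Ω ∧ ENNReal.ofReal t < (f x).abs}
        ≤ (φ t) ^ p := hContent_le_rpow hδ₁ (le_of_lt hδ₁₂) _
      _ = (φ t) ^ (p - 1) * φ t := by
          have := ENNReal.rpow_add_of_nonneg (x := φ t) (p - 1) 1 (by linarith) zero_le_one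
          rw [sub_add_cancel, ENNReal.rpow_one] at this
          exact this
      _ ≤ (B * (ENNReal.ofReal t) ^ (-θ)) ^ (p - 1) * φ t :=
          mul_le_mul_left (ENNReal.rpow_le_rpow (hφbound t ht) (by linarith)) _
      _ = B ^ (p - 1) * ((ENNReal.ofReal t) ^ (θ - 1) * φ t) := by
          rw [ENNReal.mul_rpow_of_nonneg _ _ (by linarith : (0:ℝ) ≤ p - 1),
            ← ENNReal.rpow_mul, mul_assoc]
          have hexp : -θ * (p - 1) = θ - 1 := by linear_combination -hθp
          rw [hexp]
  -- substitution step
  have hsubst : (∫⁻ t in Set.Ioi (0:ℝ), (ENNReal.ofReal t) ^ (θ - 1) * φ t)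
      = ENNReal.ofReal p * B := by
    have hderiv : ∀ u ∈ Set.Ioi (0:ℝ),
        HasDerivWithinAt (fun u : ℝ => u ^ p) (p * u ^ (p - 1)) (Set.Ioi 0) u := by
      intro u hu
      exact (Real.hasDerivAt_rpow_const (Or.inl (ne_of_gt hu))).hasDerivWithinAt
    have hinj : Set.InjOn (fun u : ℝ => u ^ p) (Set.Ioi 0) := by
      intro a ha b hb h
      have h1 : a ^ (p * (1/p)) = b ^ (p * (1/p)) := by
        rw [Real.rpow_mul (le_of_lt ha), Real.rpow_mul (le_of_lt hb)]
        simp only at h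
        rw [h]
      rwa [mul_one_div_cancel (ne_of_gt hp0), Real.rpow_one, Real.rpow_one] at h1
    have himg : (fun u : ℝ => u ^ p) '' Set.Ioi 0 = Set.Ioi (0:ℝ) := by
      ext u
      simp only [Set.mem_image, Set.mem_Ioi]
      constructor
      · rintro ⟨v, hv, rfl⟩
        exact Real.rpow_pos_of_pos hv p
      · intro hu
        refine ⟨u ^ (1/p), Real.rpow_pos_of_pos hu _, ?_⟩
        rw [← Real.rpow_mul (le_of_lt hu), one_div_mul_cancel (ne_of_gt hp0), Real.rpow_one]
    have key := lintegral_image_eq_lintegral_abs_det_fderiv_mul volume measurableSet_Ioi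
      (fun u hu => (hderiv u hu).hasFDerivWithinAt) hinj
      (fun t => (ENNReal.ofReal t) ^ (θ - 1) * φ t)
    simp only [ContinuousLinearMap.det_toSpanSingleton] at key
    rw [himg] at key
    rw [key]
    have hptw : ∀ u ∈ Set.Ioi (0:ℝ),
        ENNReal.ofReal |p * u ^ (p - 1)| *
          ((ENNReal.ofReal (u ^ p)) ^ (θ - 1) * φ (u ^ p))
        = ENNReal.ofReal p * φ (u ^ p) := by
      intro u hu
      simp only [Set.mem_Ioi] at hu
      have hup : (0:ℝ) < u ^ p := Real.rpow_pos_of_pos hu p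
      have h1 : (ENNReal.ofReal (u ^ p)) ^ (θ - 1) = ENNReal.ofReal (u ^ (1 - p)) := by
        rw [ENNReal.ofReal_rpow_of_pos hup, ← Real.rpow_mul (le_of_lt hu)]
        have hexp : p * (θ - 1) = 1 - p := by linear_combination hpθ
        rw [hexp]
      have habs : |p * u ^ (p - 1)| = p * u ^ (p - 1) := by
        rw [abs_of_pos]
        positivity
      rw [habs, h1, ← mul_assoc, ← ENNReal.ofReal_mul (by positivity)]
      congr 2
      rw [mul_assoc, ← Real.rpow_add hu]
      norm_num
    rw [setLIntegral_congr_fun measurableSet_Ioi hptw,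
      lintegral_const_mul' _ _ ENNReal.ofReal_ne_top, ← stepB]
  -- main bound : A ≤ ofReal p * B ^ p
  have hBp : B ^ (p - 1) ≠ ⊤ := ENNReal.rpow_ne_top_of_nonneg (by linarith) hB
  have main : A ≤ ENNReal.ofReal p * B ^ p := by
    calc A ≤ ∫⁻ t in Set.Ioi (0:ℝ),
          B ^ (p - 1) * ((ENNReal.ofReal t) ^ (θ - 1) * φ t) := by
          rw [hAdef]
          unfold choquet
          exact setLIntegral_mono' measurableSet_Ioi fun t ht => hpoint t ht
      _ = B ^ (p - 1) * ∫⁻ t in Set.Ioi (0:ℝ), (ENNReal.ofReal t) ^ (θ - 1) * φ t :=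
          lintegral_const_mul' _ _ hBp
      _ = B ^ (p - 1) * (ENNReal.ofReal p * B) := by rw [hsubst]
      _ = ENNReal.ofReal p * (B ^ (p - 1) * B ^ (1:ℝ)) := by
          rw [ENNReal.rpow_one]; ring
      _ = ENNReal.ofReal p * B ^ p := by
          rw [← ENNReal.rpow_add_of_nonneg _ _ (by linarith) zero_le_one, sub_add_cancel]
  -- conclude
  calc A ^ (1 / δ₂) ≤ (ENNReal.ofReal p * B ^ p) ^ (1 / δ₂) :=
        ENNReal.rpow_le_rpow main (by positivity)
    _ = (ENNReal.ofReal p) ^ (1 / δ₂) * (B ^ p) ^ (1 / δ₂) :=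
        ENNReal.mul_rpow_of_nonneg _ _ (by positivity)
    _ = ENNReal.ofReal (p ^ (1 / δ₂)) * B ^ (1 / δ₁) := by
        rw [ENNReal.ofReal_rpow_of_pos hp0, ← ENNReal.rpow_mul]
        congr 2
        rw [hpdef]
        field_simp
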